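/- Let s and t be complex numbers with Re(s) > 1 and Re(t) > 1. Then the double series ∑_{n=1}^∞ ∑_{m=1}^∞ C_n^m / (n^t · m^s) converges and equals ζ(s) · ζ(s + t − 1) / ζ(t), where C_n^m is the Ramanujan sum and ζ is the Riemann zeta function. -/

import Mathlib

open Complex Finset Polynomial
open scoped ArithmeticFunction ArithmeticFunction.Moebius

/-- The Ramanujan sum `C n m`: the sum of the `m`-th powers of the primitive
`n`-th roots of unity in `ℂ`. -/
noncomputable def ramanujanSum (n m : ℕ) : ℂ :=
  ∑ ξ ∈ primitiveRoots n ℂ, ξ ^ m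

private lemma sum_nthRoots_pow {n m : ℕ} (hn : 0 < n) :
    ∑ ξ ∈ Polynomial.nthRootsFinset n (1 : ℂ), ξ ^ m = if n ∣ m then (n : ℂ) else 0 := by
  have hζ := Complex.isPrimitiveRoot_exp n hn.ne'
  set z := Complex.exp (2 * Real.pi * Complex.I / n) with hzdef
  have : NeZero n := ⟨hn.ne'⟩
  have hpow : ∀ m' : ℕ, (z ^ m') ^ n = 1 := fun m' => by
    rw [← pow_mul, mul_comm, pow_mul, hζ.pow_eq_one, one_pow]
  have key : ∑ ξ ∈ Polynomial.nthRootsFinset n (1 : ℂ), ξ ^ m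
      = ∑ i ∈ Finset.range n, (z ^ m) ^ i := by
    refine (Finset.sum_bij (fun i _ => z ^ i) ?_ ?_ ?_ ?_).symm
    · intro i _
      exact (Polynomial.mem_nthRootsFinset hn (1 : ℂ)).2 (hpow i)
    · intro i hi j hj h
      exact hζ.pow_inj (Finset.mem_range.1 hi) (Finset.mem_range.1 hj) h
    · intro ξ hξ
      obtain ⟨i, hi, rfl⟩ := hζ.eq_pow_of_pow_eq_one ((Polynomial.mem_nthRootsFinset hn (1 : ℂ)).1 hξ)
      exact ⟨i, Finset.mem_range.2 hi, rfl⟩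
    · intro i _
      rw [← pow_mul, ← pow_mul, mul_comm]
  rw [key]
  by_cases h : n ∣ m
  · rw [if_pos h, (hζ.pow_eq_one_iff_dvd m).2 h]
    simp
  · rw [if_neg h, geom_sum_eq (fun hh => h ((hζ.pow_eq_one_iff_dvd m).1 hh)), hpow m,
      sub_self, zero_div]

private lemma sum_ramanujanSum_divisors (m : ℕ) : ∀ n > 0,
    ∑ d ∈ n.divisors, ramanujanSum d m = if n ∣ m then (n : ℂ) else 0 := by
  intro n hn
  classical
  have hζ := Complex.isPrimitiveRoot_exp n hn.ne'
  rw [← sum_nthRoots_pow hn, IsPrimitiveRoot.nthRoots_one_eq_biUnion_primitiveRoots,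
    Finset.sum_biUnion fun i _ j _ hij => IsPrimitiveRoot.disjoint hij]
  rfl

private lemma ramanujanSum_eq_sum_gcd_divisors {n m : ℕ} (hn : 0 < n) :
    ramanujanSum n m = ∑ d ∈ (Nat.gcd n m).divisors, (μ (n / d) : ℂ) * d := by
  have key := (ArithmeticFunction.sum_eq_iff_sum_mul_moebius_eq
      (f := fun d => ramanujanSum d m)
      (g := fun k => if k ∣ m then (k : ℂ) else 0)).1 (sum_ramanujanSum_divisors m) n hn
  rw [← key, Nat.sum_divisorsAntidiagonal'
    (f := fun a b => (μ a : ℂ) * (if b ∣ m then (b : ℂ) else 0))]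
  have hfil : (Nat.gcd n m).divisors = n.divisors.filter (· ∣ m) := by
    ext d
    simp only [Nat.mem_divisors, Finset.mem_filter, Nat.dvd_gcd_iff]
    constructor
    · rintro ⟨⟨h1, h2⟩, -⟩
      exact ⟨⟨h1, hn.ne'⟩, h2⟩
    · rintro ⟨⟨h1, -⟩, h2⟩
      exact ⟨⟨h1, h2⟩, Nat.gcd_ne_zero_left hn.ne'⟩
  rw [hfil, Finset.sum_filter]
  refine Finset.sum_congr rfl fun d _ => ?_
  by_cases h : d ∣ m <;> simp [h]

private lemma summable_norm_aux {z : ℂ} (hz : 1 < z.re) :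
    Summable fun n : ℕ => ‖1 / (n : ℂ) ^ z‖ := by
  have hz0 : z ≠ 0 := fun h => by simp [h] at hz; linarith
  refine Summable.of_nonneg_of_le (fun n => norm_nonneg _) (fun n => ?_)
    (Real.summable_one_div_nat_rpow.2 hz)
  rcases Nat.eq_zero_or_pos n with rfl | hn
  · simp only [Nat.cast_zero, Complex.zero_cpow hz0, div_zero, norm_zero]
    positivity
  · rw [norm_div, norm_one, Complex.norm_natCast_cpow_of_pos hn]

set_option maxHeartbeats 1000000 in
/-- For `Re s > 1` and `Re t > 1`, the double Dirichlet series of Ramanujan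
sums converges and
`∑_{n,m ≥ 1} C_n^m / (n^t · m^s) = ζ(s) · ζ(s+t-1) / ζ(t)`. -/
theorem tsum_tsum_ramanujanSum (s t : ℂ) (hs : 1 < s.re) (ht : 1 < t.re) :
    Summable (fun q : ℕ × ℕ =>
      if q.1 = 0 ∨ q.2 = 0 then (0 : ℂ)
      else ramanujanSum q.1 q.2 / ((q.1 : ℂ) ^ t * (q.2 : ℂ) ^ s)) ∧
    ∑' q : ℕ × ℕ, (if q.1 = 0 ∨ q.2 = 0 then (0 : ℂ)
      else ramanujanSum q.1 q.2 / ((q.1 : ℂ) ^ t * (q.2 : ℂ) ^ s)) =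
      riemannZeta s * riemannZeta (s + t - 1) / riemannZeta t := by
  have hs0 : s ≠ 0 := fun h => by simp [h] at hs; linarith
  have ht0 : t ≠ 0 := fun h => by simp [h] at ht; linarith
  have hst : 1 < (s + t - 1).re := by
    simp only [Complex.sub_re, Complex.add_re, Complex.one_re]; linarith
  have hst0 : s + t - 1 ≠ 0 := by
    intro h; rw [h] at hst; norm_num at hst
  set g : ℕ × ℕ × ℕ → ℂ := fun x =>
    ((μ x.1 : ℤ) : ℂ) / (x.1 : ℂ) ^ t *
      (1 / (x.2.1 : ℂ) ^ (s + t - 1) * (1 / (x.2.2 : ℂ) ^ s)) with hgdef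
  -- norm-summability of the three factors
  have ha_norm : Summable fun k : ℕ => ‖((μ k : ℤ) : ℂ) / (k : ℂ) ^ t‖ := by
    refine Summable.of_nonneg_of_le (fun n => norm_nonneg _) (fun n => ?_)
      (Real.summable_one_div_nat_rpow.2 ht)
    rcases Nat.eq_zero_or_pos n with rfl | hn
    · simp only [ArithmeticFunction.map_zero, Int.cast_zero, zero_div, norm_zero]
      positivity
    · rw [norm_div, Complex.norm_natCast_cpow_of_pos hn]
      have h1 : ‖((μ n : ℤ) : ℂ)‖ ≤ 1 := by
        rw [Complex.norm_intCast]
        exact_mod_cast ArithmeticFunction.abs_moebius_le_one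
      gcongr
  have hb_norm := summable_norm_aux hst
  have hc_norm := summable_norm_aux hs
  have hbc_norm : Summable fun y : ℕ × ℕ =>
      ‖1 / (y.1 : ℂ) ^ (s + t - 1) * (1 / (y.2 : ℂ) ^ s)‖ :=
    Summable.mul_norm (f := fun d : ℕ => 1 / (d : ℂ) ^ (s + t - 1))
      (g := fun j : ℕ => 1 / (j : ℂ) ^ s) hb_norm hc_norm
  have hg_sum : Summable g :=
    summable_mul_of_summable_norm (f := fun k : ℕ => ((μ k : ℤ) : ℂ) / (k : ℂ) ^ t)
      (g := fun y : ℕ × ℕ => 1 / (y.1 : ℂ) ^ (s + t - 1) * (1 / (y.2 : ℂ) ^ s))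
      ha_norm hbc_norm
  -- the value of the triple sum
  have hA : ∑' k : ℕ, ((μ k : ℤ) : ℂ) / (k : ℂ) ^ t = (riemannZeta t)⁻¹ := by
    have h1 : ∑' k : ℕ, ((μ k : ℤ) : ℂ) / (k : ℂ) ^ t
        = LSeries (fun k => ((μ k : ℤ) : ℂ)) t := by
      unfold LSeries
      refine tsum_congr fun k => ?_
      rcases eq_or_ne k 0 with rfl | hk
      · simp [LSeries.term_zero]
      · rw [LSeries.term_of_ne_zero hk]
    have h2 : riemannZeta t * LSeries (fun k => ((μ k : ℤ) : ℂ)) t = 1 := by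
      have := LSeries_one_mul_Lseries_moebius ht
      rwa [LSeries_one_eq_riemannZeta ht] at this
    rw [h1]
    exact (inv_eq_of_mul_eq_one_right h2).symm
  have hg_tsum : ∑' x, g x
      = (riemannZeta t)⁻¹ * (riemannZeta (s + t - 1) * riemannZeta s) := by
    rw [hgdef, ← tsum_mul_tsum_of_summable_norm (f := fun k : ℕ => ((μ k : ℤ) : ℂ) / (k : ℂ) ^ t)
        (g := fun y : ℕ × ℕ => 1 / (y.1 : ℂ) ^ (s + t - 1) * (1 / (y.2 : ℂ) ^ s))
        ha_norm hbc_norm,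
      ← tsum_mul_tsum_of_summable_norm (f := fun d : ℕ => 1 / (d : ℂ) ^ (s + t - 1))
        (g := fun j : ℕ => 1 / (j : ℂ) ^ s) hb_norm hc_norm, hA,
      ← zeta_eq_tsum_one_div_nat_cpow hst, ← zeta_eq_tsum_one_div_nat_cpow hs]
  -- transfer to the divisor-indexed function `G`
  set G : (ℕ × ℕ) × ℕ → ℂ := fun y =>
    if y.2 ∣ y.1.1 ∧ y.2 ∣ y.1.2 ∧ y.2 ≠ 0 then g (y.1.1 / y.2, y.2, y.1.2 / y.2) else 0
    with hGdef
  have hGsupp : ∀ y : (ℕ × ℕ) × ℕ, G y ≠ 0 → y.2 ∣ y.1.1 ∧ y.2 ∣ y.1.2 ∧ y.2 ≠ 0 := by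
    intro y hy
    by_contra h
    exact hy (if_neg h)
  have hG : HasSum G (∑' x, g x) := by
    refine (hasSum_iff_hasSum_of_ne_zero_bij
      (f := g) (a := ∑' x, g x)
      (fun y => ((y : (ℕ × ℕ) × ℕ).1.1 / (y : (ℕ × ℕ) × ℕ).2,
        (y : (ℕ × ℕ) × ℕ).2, (y : (ℕ × ℕ) × ℕ).1.2 / (y : (ℕ × ℕ) × ℕ).2))
      ?_ ?_ ?_).1 hg_sum.hasSum
    · rintro ⟨⟨⟨n, m⟩, d⟩, hy⟩ ⟨⟨⟨n', m'⟩, d'⟩, hy'⟩ h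
      obtain ⟨h1, h2, h3⟩ := hGsupp _ hy
      obtain ⟨h1', h2', h3'⟩ := hGsupp _ hy'
      dsimp only at h1 h2 h3 h1' h2' h3'
      apply Subtype.ext
      simp only [Prod.mk.injEq] at h ⊢
      obtain ⟨e1, e2, e3⟩ := h
      refine ⟨⟨?_, ?_⟩, e2⟩
      · rw [← Nat.div_mul_cancel h1, ← Nat.div_mul_cancel h1', e1, e2]
      · rw [← Nat.div_mul_cancel h2, ← Nat.div_mul_cancel h2', e3, e2]
    · rintro ⟨k, d, j⟩ hx
      have hd0 : d ≠ 0 := by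
        rintro rfl
        apply hx
        simp [hgdef, Complex.zero_cpow hst0]
      have hcond : d ∣ k * d ∧ d ∣ d * j ∧ d ≠ 0 :=
        ⟨dvd_mul_left d k, dvd_mul_right d j, hd0⟩
      have hval : G ((k * d, d * j), d) = g (k, d, j) := by
        rw [hGdef]
        simp only [if_pos hcond]
        rw [Nat.mul_div_cancel k (Nat.pos_of_ne_zero hd0),
          Nat.mul_div_cancel_left j (Nat.pos_of_ne_zero hd0)]
      refine ⟨⟨((k * d, d * j), d), ?_⟩, ?_⟩
      · rw [Function.mem_support, hval]
        exact hx
      · simp only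
        rw [Nat.mul_div_cancel k (Nat.pos_of_ne_zero hd0),
          Nat.mul_div_cancel_left j (Nat.pos_of_ne_zero hd0)]
    · rintro ⟨⟨⟨n, m⟩, d⟩, hy⟩
      obtain ⟨h1, h2, h3⟩ := hGsupp _ hy
      simp only [hGdef]
      rw [if_pos ⟨h1, h2, h3⟩]
  -- fiberwise sums
  have hfiber : ∀ p : ℕ × ℕ, HasSum (fun d => G (p, d))
      (if p.1 = 0 ∨ p.2 = 0 then (0 : ℂ)
        else ramanujanSum p.1 p.2 / ((p.1 : ℂ) ^ t * (p.2 : ℂ) ^ s)) := by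
    rintro ⟨n, m⟩
    by_cases hp : n = 0 ∨ m = 0
    · rw [if_pos hp]
      have hzero : (fun d : ℕ => G ((n, m), d)) = fun _ => 0 := by
        funext d
        rw [hGdef]
        simp only
        split
        · rcases hp with hp | hp
          · subst hp
            simp [hgdef, Nat.zero_div]
          · subst hp
            simp [hgdef, Nat.zero_div, Complex.zero_cpow hs0]
        · rfl
      rw [hzero]
      exact hasSum_zero
    · rw [if_neg hp]
      simp only [not_or] at hp
      obtain ⟨hn, hm⟩ := hp
      simp only
      have hgcd : Nat.gcd n m ≠ 0 := Nat.gcd_ne_zero_left hn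
      have hout : ∀ d ∉ (Nat.gcd n m).divisors, G ((n, m), d) = 0 := by
        intro d hd
        rw [hGdef]
        refine if_neg ?_
        rintro ⟨hd1, hd2, hd3⟩
        exact hd (Nat.mem_divisors.2 ⟨Nat.dvd_gcd hd1 hd2, hgcd⟩)
      have hfin : HasSum (fun d => G ((n, m), d)) (∑ d ∈ (Nat.gcd n m).divisors, G ((n, m), d)) :=
        hasSum_sum_of_ne_finset_zero hout
      have hval : ∑ d ∈ (Nat.gcd n m).divisors, G ((n, m), d)
          = ramanujanSum n m / ((n : ℂ) ^ t * (m : ℂ) ^ s) := by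
        rw [ramanujanSum_eq_sum_gcd_divisors (Nat.pos_of_ne_zero hn), Finset.sum_div]
        refine Finset.sum_congr rfl fun d hd => ?_
        have hdg : d ∣ Nat.gcd n m := (Nat.mem_divisors.1 hd).1
        have hdn : d ∣ n := hdg.trans (Nat.gcd_dvd_left n m)
        have hdm : d ∣ m := hdg.trans (Nat.gcd_dvd_right n m)
        have hd0 : d ≠ 0 := (Nat.pos_of_mem_divisors hd).ne'
        rw [hGdef]
        simp only
        rw [if_pos ⟨hdn, hdm, hd0⟩, hgdef]
        simp only
        have hdc : (d : ℂ) ≠ 0 := Nat.cast_ne_zero.2 hd0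
        have e1 : ((n / d : ℕ) : ℂ) * (d : ℂ) = (n : ℂ) := by
          rw [← Nat.cast_mul, Nat.div_mul_cancel hdn]
        have e2 : ((m / d : ℕ) : ℂ) * (d : ℂ) = (m : ℂ) := by
          rw [← Nat.cast_mul, Nat.div_mul_cancel hdm]
        have hkc : ((n / d : ℕ) : ℂ) ≠ 0 := by
          intro h
          rw [h, zero_mul] at e1
          exact Nat.cast_ne_zero.2 hn e1.symm
        have hjc : ((m / d : ℕ) : ℂ) ≠ 0 := by
          intro h
          rw [h, zero_mul] at e2
          exact Nat.cast_ne_zero.2 hm e2.symm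
        have En : (n : ℂ) ^ t = ((n / d : ℕ) : ℂ) ^ t * (d : ℂ) ^ t := by
          rw [← Complex.natCast_mul_natCast_cpow, e1]
        have Em : (m : ℂ) ^ s = ((m / d : ℕ) : ℂ) ^ s * (d : ℂ) ^ s := by
          rw [← Complex.natCast_mul_natCast_cpow, e2]
        have Ed : (d : ℂ) ^ (s + t - 1) = (d : ℂ) ^ s * (d : ℂ) ^ t / (d : ℂ) := by
          rw [Complex.cpow_sub _ _ hdc, Complex.cpow_add _ _ hdc, Complex.cpow_one]
        have p1 : ((n / d : ℕ) : ℂ) ^ t ≠ 0 :=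
          fun h => hkc ((Complex.cpow_eq_zero_iff _ _).1 h).1
        have p2 : ((m / d : ℕ) : ℂ) ^ s ≠ 0 :=
          fun h => hjc ((Complex.cpow_eq_zero_iff _ _).1 h).1
        have p3 : (d : ℂ) ^ t ≠ 0 := fun h => hdc ((Complex.cpow_eq_zero_iff _ _).1 h).1
        have p4 : (d : ℂ) ^ s ≠ 0 := fun h => hdc ((Complex.cpow_eq_zero_iff _ _).1 h).1
        rw [En, Em, Ed]
        field_simp
      exact hval ▸ hfin
  have main := hG.prod_fiberwise hfiber
  refine ⟨main.summable, ?_⟩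
  rw [main.tsum_eq, hg_tsum, div_eq_mul_inv]
  ring
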